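/- Let 1 < q < p < ∞. There exists a nonzero bounded linear functional L on M^p_q(ℝ) that vanishes on every compactly supported function in M^p_q(ℝ); in particular L is not represented by integration against any function g ∈ L^{p'}(ℝ) (the only candidate g would be 0 a.e.). -/

import Mathlib

open MeasureTheory ENNReal Set Filter
open scoped Topology

/-- The one-dimensional Morrey norm `‖f‖_{M^p_q}` on `ℝ`. -/
noncomputable def morreyNorm1 (p q : ℝ) (f : ℝ → ℝ) : ℝ≥0∞ :=
  ⨆ (a : ℝ) (s : ℝ) (_ : 0 < s),
    ENNReal.ofReal (s ^ (1 / p - 1 / q)) *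
      (∫⁻ x in Set.Ioo a (a + s), ENNReal.ofReal (|f x| ^ q)) ^ (1 / q)

/-- Membership in the Morrey space M^p_q(ℝ). -/
def MemMorrey1 (p q : ℝ) (f : ℝ → ℝ) : Prop :=
  Measurable f ∧ morreyNorm1 p q f < ⊤

-- term ≤ norm
lemma term_le_morrey (p q : ℝ) (f : ℝ → ℝ) (a s : ℝ) (hs : 0 < s) :
    ENNReal.ofReal (s ^ (1 / p - 1 / q)) *
      (∫⁻ x in Set.Ioo a (a + s), ENNReal.ofReal (|f x| ^ q)) ^ (1 / q) ≤ morreyNorm1 p q f :=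
  le_iSup_of_le a (le_iSup_of_le s (le_iSup_of_le hs le_rfl))

-- Hölder: unit window L¹ bound
lemma window_le_morrey (p q : ℝ) (hq : 1 < q) (f : ℝ → ℝ) (hf : Measurable f) (a : ℝ) :
    ∫⁻ x in Set.Ioo a (a + 1), ENNReal.ofReal |f x| ≤ morreyNorm1 p q f := by
  have hq0 : (0:ℝ) < q := lt_trans zero_lt_one hq
  have hconj : q.HolderConjugate (q / (q - 1)) := by
    exact (Real.holderConjugate_iff_eq_conjExponent hq).mpr rfl
  have hmeas : AEMeasurable (fun x => ENNReal.ofReal |f x|)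
      (volume.restrict (Set.Ioo a (a + 1))) :=
    (measurable_abs.comp hf).ennreal_ofReal.aemeasurable
  have H := ENNReal.lintegral_mul_le_Lp_mul_Lq (volume.restrict (Set.Ioo a (a + 1))) hconj
    hmeas (aemeasurable_const (b := (1 : ℝ≥0∞)))
  simp only [Pi.mul_apply, mul_one, Pi.one_apply, ENNReal.one_rpow, lintegral_const,
    one_mul] at H
  have hvol : (volume.restrict (Set.Ioo a (a + 1))) Set.univ = 1 := by
    simp [Real.volume_Ioo]
  rw [hvol, ENNReal.one_rpow, mul_one] at H
  refine le_trans H ?_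
  have hpow : ∀ x : ℝ, ENNReal.ofReal |f x| ^ q = ENNReal.ofReal (|f x| ^ q) := fun x =>
    ENNReal.ofReal_rpow_of_nonneg (abs_nonneg _) hq0.le
  simp only [hpow]
  have := term_le_morrey p q f a 1 one_pos
  simpa [Real.one_rpow] using this

lemma integrableOn_of_morrey (p q : ℝ) (hq : 1 < q) (f : ℝ → ℝ) (hf : MemMorrey1 p q f)
    (a : ℝ) : IntegrableOn f (Set.Ioo a (a + 1)) volume := by
  refine ⟨hf.1.aestronglyMeasurable.restrict, ?_⟩
  rw [HasFiniteIntegral]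
  have : ∀ x : ℝ, ‖f x‖ₑ = ENNReal.ofReal |f x| := by
    intro x
    rw [Real.enorm_eq_ofReal_abs]
  simp only [this]
  exact lt_of_le_of_lt (window_le_morrey p q hq f hf.1 a) hf.2

lemma abs_integral_le_morrey (p q : ℝ) (hq : 1 < q) (f : ℝ → ℝ) (hf : MemMorrey1 p q f) (a : ℝ) :
    |∫ x in Set.Ioo a (a + 1), f x| ≤ (morreyNorm1 p q f).toReal := by
  have h1 : |∫ x in Set.Ioo a (a + 1), f x| ≤
      (∫⁻ x in Set.Ioo a (a + 1), ENNReal.ofReal ‖f x‖).toReal := by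
    rw [← Real.norm_eq_abs]
    exact norm_integral_le_lintegral_norm f
  refine le_trans h1 (ENNReal.toReal_mono hf.2.ne ?_)
  simpa [Real.norm_eq_abs] using window_le_morrey p q hq f hf.1 a


open NNReal in
lemma real_rpow_add_le {x y θ : ℝ} (hx : 0 ≤ x) (hy : 0 ≤ y) (h0 : 0 ≤ θ) (h1 : θ ≤ 1) :
    (x + y) ^ θ ≤ x ^ θ + y ^ θ := by
  have h := NNReal.rpow_add_le_add_rpow (x.toNNReal) (y.toNNReal) h0 h1
  calc (x + y) ^ θ = ((x.toNNReal + y.toNNReal : ℝ≥0) : ℝ) ^ θ := by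
        rw [NNReal.coe_add, Real.coe_toNNReal _ hx, Real.coe_toNNReal _ hy]
    _ = (((x.toNNReal + y.toNNReal) ^ θ : ℝ≥0) : ℝ) := by rw [NNReal.coe_rpow]
    _ ≤ ((x.toNNReal ^ θ + y.toNNReal ^ θ : ℝ≥0) : ℝ) := by exact_mod_cast h
    _ = x ^ θ + y ^ θ := by
        rw [NNReal.coe_add, NNReal.coe_rpow, NNReal.coe_rpow, Real.coe_toNNReal _ hx,
          Real.coe_toNNReal _ hy]

lemma count_bound (α : ℝ) (hα1 : 1 ≤ α) (a s : ℝ) (hs : 0 < s) :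
    volume ((⋃ k : ℕ, Set.Ioo ((k:ℝ)^α) ((k:ℝ)^α + 1)) ∩ Set.Ioo a (a + s)) ≤
      ENNReal.ofReal ((s + 1) ^ (1/α) + 1) := by
  have hα0 : 0 < α := lt_of_lt_of_le zero_lt_one hα1
  set m : ℝ := max (a - 1) 0 with hm
  set t : ℝ := (s + 1) ^ (1/α) with ht
  have hm0 : 0 ≤ m := le_max_right _ _
  have ht0 : 0 ≤ t := Real.rpow_nonneg (by linarith) _
  set m' : ℕ := ⌈m ^ (1/α)⌉₊ with hm'
  set M' : ℕ := ⌊m ^ (1/α) + t⌋₊ with hM'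
  have hsub : (⋃ k : ℕ, Set.Ioo ((k:ℝ)^α) ((k:ℝ)^α + 1)) ∩ Set.Ioo a (a + s) ⊆
      ⋃ k ∈ Finset.Icc m' M', Set.Ioo ((k:ℝ)^α) ((k:ℝ)^α + 1) := by
    rintro x ⟨hxS, hxW⟩
    rw [Set.mem_iUnion] at hxS
    obtain ⟨k, hk⟩ := hxS
    rw [Set.mem_iUnion₂]
    refine ⟨k, ?_, hk⟩
    have hk1 : (k:ℝ)^α < x := hk.1
    have hk2 : x < (k:ℝ)^α + 1 := hk.2
    have hxa : a < x := hxW.1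
    have hxas : x < a + s := hxW.2
    have hkα0 : (0:ℝ) ≤ (k:ℝ)^α := Real.rpow_nonneg (Nat.cast_nonneg k) α
    have hid : ((k:ℝ)^α) ^ (1/α) = (k:ℝ) := by
      rw [← Real.rpow_mul (Nat.cast_nonneg k) α (1/α), mul_one_div, div_self hα0.ne',
        Real.rpow_one]
    refine Finset.mem_Icc.mpr ⟨?_, ?_⟩
    · apply Nat.ceil_le.mpr
      rw [← hid]
      exact Real.rpow_le_rpow hm0 (max_le (by linarith) hkα0) (by positivity)
    · apply Nat.le_floor
      have h1 : (k:ℝ)^α ≤ m + (s+1) := by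
        have : a - 1 ≤ m := le_max_left _ _
        linarith
      have h2 : (k:ℝ) ≤ (m + (s+1)) ^ (1/α) := by
        rw [← hid]; exact Real.rpow_le_rpow hkα0 h1 (by positivity)
      refine le_trans h2 ?_
      have h1α : 1/α ≤ 1 := by
        rw [div_le_one hα0]; exact hα1
      exact real_rpow_add_le hm0 (by linarith) (by positivity) h1α
  refine le_trans (measure_mono hsub) ?_
  refine le_trans (measure_biUnion_finset_le _ _) ?_
  have hIvol : ∀ k : ℕ, volume (Set.Ioo ((k:ℝ)^α) ((k:ℝ)^α + 1)) = 1 := by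
    intro k; rw [Real.volume_Ioo]; simp
  rw [Finset.sum_congr rfl (fun k _ => hIvol k), Finset.sum_const, nsmul_eq_mul, mul_one,
    Nat.card_Icc]
  by_cases hle : m' ≤ M' + 1
  · calc ((M' + 1 - m' : ℕ) : ℝ≥0∞) = ENNReal.ofReal ((M' + 1 - m' : ℕ) : ℝ) :=
        (ENNReal.ofReal_natCast _).symm
      _ ≤ ENNReal.ofReal (t + 1) := by
        apply ENNReal.ofReal_le_ofReal
        rw [Nat.cast_sub hle]
        have h3 : (M' : ℝ) ≤ m ^ (1/α) + t := Nat.floor_le (by positivity)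
        have h4 : m ^ (1/α) ≤ (m' : ℝ) := Nat.le_ceil _
        push_cast
        linarith
  · rw [Nat.sub_eq_zero_of_le (by omega)]
    simp

lemma witness_norm_le (p q : ℝ) (hq : 1 < q) (hqp : q < p) :
    morreyNorm1 p q ((⋃ k : ℕ, Set.Ioo ((k:ℝ)^(p/(p-q))) ((k:ℝ)^(p/(p-q)) + 1)).indicator
      (fun _ => (1:ℝ))) ≤ ENNReal.ofReal 3 := by
  have hq0 : (0:ℝ) < q := lt_trans zero_lt_one hq
  have hp0 : (0:ℝ) < p := lt_trans hq0 hqp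
  have hpq0 : (0:ℝ) < p - q := sub_pos.mpr hqp
  have hα1 : 1 ≤ p / (p - q) := (one_le_div hpq0).mpr (by linarith)
  set S : Set ℝ := ⋃ k : ℕ, Set.Ioo ((k:ℝ)^(p/(p-q))) ((k:ℝ)^(p/(p-q)) + 1) with hSdef
  have hS : MeasurableSet S := MeasurableSet.iUnion fun k => measurableSet_Ioo
  rw [morreyNorm1]
  refine iSup_le fun a => iSup_le fun s => iSup_le fun hs => ?_
  have hind : ∀ x : ℝ, ENNReal.ofReal (|S.indicator (fun _ => (1:ℝ)) x| ^ q) =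
      S.indicator (fun _ => (1:ℝ≥0∞)) x := by
    intro x
    by_cases hx : x ∈ S
    · simp [Set.indicator_of_mem hx, Real.one_rpow]
    · simp [Set.indicator_of_notMem hx, Real.zero_rpow hq0.ne']
  have hint : ∫⁻ x in Set.Ioo a (a + s),
      ENNReal.ofReal (|S.indicator (fun _ => (1:ℝ)) x| ^ q) = volume (S ∩ Set.Ioo a (a + s)) := by
    simp_rw [hind]
    rw [lintegral_indicator hS, setLIntegral_one, Measure.restrict_apply hS]
  rw [hint]
  by_cases hs1 : s ≤ 1
  · have hv : volume (S ∩ Set.Ioo a (a + s)) ≤ ENNReal.ofReal s := by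
      refine le_trans (measure_mono Set.inter_subset_right) ?_
      rw [Real.volume_Ioo]; simp
    calc ENNReal.ofReal (s ^ (1/p - 1/q)) * volume (S ∩ Set.Ioo a (a + s)) ^ (1/q)
        ≤ ENNReal.ofReal (s ^ (1/p - 1/q)) * (ENNReal.ofReal s) ^ (1/q) := by gcongr
      _ = ENNReal.ofReal (s ^ (1/p - 1/q) * s ^ (1/q)) := by
          rw [ENNReal.ofReal_rpow_of_pos hs, ← ENNReal.ofReal_mul (by positivity)]
      _ ≤ ENNReal.ofReal 3 := by
          apply ENNReal.ofReal_le_ofReal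
          rw [← Real.rpow_add hs]
          have : 1/p - 1/q + 1/q = 1/p := by ring
          rw [this]
          have h1 : s ^ (1/p) ≤ 1 := Real.rpow_le_one hs.le hs1 (by positivity)
          linarith
  · push_neg at hs1
    have hcount := count_bound (p/(p-q)) hα1 a s hs
    have hα0 : (0:ℝ) < p/(p-q) := lt_of_lt_of_le zero_lt_one hα1
    have hια : (0:ℝ) ≤ 1/(p/(p-q)) := by positivity
    have h3 : (s + 1) ^ (1/(p/(p-q))) + 1 ≤ 3 * s ^ (1/(p/(p-q))) := by
      have e2 : (s+1) ^ (1/(p/(p-q))) ≤ (2*s) ^ (1/(p/(p-q))) :=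
        Real.rpow_le_rpow (by linarith) (by linarith) hια
      have e3 : ((2*s):ℝ) ^ (1/(p/(p-q))) = 2 ^ (1/(p/(p-q))) * s ^ (1/(p/(p-q))) :=
        Real.mul_rpow (by norm_num) (by linarith)
      have e4 : (2:ℝ) ^ (1/(p/(p-q))) ≤ 2 := by
        calc (2:ℝ) ^ (1/(p/(p-q))) ≤ 2 ^ (1:ℝ) :=
              Real.rpow_le_rpow_of_exponent_le (by norm_num) ((div_le_one hα0).mpr hα1)
          _ = 2 := Real.rpow_one 2
      have e5 : 1 ≤ s ^ (1/(p/(p-q))) := Real.one_le_rpow hs1.le hια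
      have e6 : 2 ^ (1/(p/(p-q))) * s ^ (1/(p/(p-q))) ≤ 2 * s ^ (1/(p/(p-q))) :=
        mul_le_mul_of_nonneg_right e4 (by linarith)
      rw [e3] at e2
      linarith
    calc ENNReal.ofReal (s ^ (1/p - 1/q)) * volume (S ∩ Set.Ioo a (a + s)) ^ (1/q)
        ≤ ENNReal.ofReal (s ^ (1/p - 1/q)) *
            (ENNReal.ofReal (3 * s ^ (1/(p/(p-q))))) ^ (1/q) := by
          gcongr
          exact hcount.trans (ENNReal.ofReal_le_ofReal h3)
      _ = ENNReal.ofReal (s ^ (1/p - 1/q) * (3 * s ^ (1/(p/(p-q)))) ^ (1/q)) := by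
          rw [ENNReal.ofReal_rpow_of_nonneg (by positivity) (by positivity),
            ← ENNReal.ofReal_mul (by positivity)]
      _ ≤ ENNReal.ofReal 3 := by
          apply ENNReal.ofReal_le_ofReal
          rw [Real.mul_rpow (by norm_num) (by positivity), ← Real.rpow_mul hs.le]
          have hexp : 1/p - 1/q + 1/(p/(p-q)) * (1/q) = 0 := by
            rw [one_div_div]
            field_simp
            ring
          calc s ^ (1/p - 1/q) * ((3:ℝ) ^ (1/q) * s ^ (1/(p/(p-q)) * (1/q)))
              = 3 ^ (1/q) * s ^ (1/p - 1/q + 1/(p/(p-q)) * (1/q)) := by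
                rw [Real.rpow_add hs]; ring
            _ = 3 ^ (1/q) := by rw [hexp, Real.rpow_zero, mul_one]
            _ ≤ 3 := by
                calc (3:ℝ) ^ (1/q) ≤ 3 ^ (1:ℝ) :=
                      Real.rpow_le_rpow_of_exponent_le (by norm_num)
                        (by rw [div_le_one hq0]; exact hq.le)
                  _ = 3 := Real.rpow_one 3

theorem stmt17 (p q : ℝ) (hq : 1 < q) (hqp : q < p) :
    ∃ L : (ℝ → ℝ) → ℝ,
      (∀ f g, MemMorrey1 p q f → MemMorrey1 p q g → L (f + g) = L f + L g) ∧
      (∀ (c : ℝ) f, MemMorrey1 p q f → L (c • f) = c * L f) ∧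
      (∃ C : ℝ, 0 ≤ C ∧ ∀ f, MemMorrey1 p q f →
        ENNReal.ofReal |L f| ≤ ENNReal.ofReal C * morreyNorm1 p q f) ∧
      (∃ f, MemMorrey1 p q f ∧ L f ≠ 0) ∧
      (∀ f, MemMorrey1 p q f → HasCompactSupport f → L f = 0) := by
  have hq0 : (0:ℝ) < q := lt_trans zero_lt_one hq
  have hp0 : (0:ℝ) < p := lt_trans hq0 hqp
  have hpq0 : (0:ℝ) < p - q := sub_pos.mpr hqp
  have hα1 : 1 ≤ p / (p - q) := (one_le_div hpq0).mpr (by linarith)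
  set α : ℝ := p / (p - q) with hαdef
  set I : ℕ → Set ℝ := fun k => Set.Ioo ((k:ℝ)^α) ((k:ℝ)^α + 1) with hIdef
  set c : (ℝ → ℝ) → ℕ → ℝ := fun f k => ∫ x in I k, f x with hcdef
  set U : Ultrafilter ℕ := Ultrafilter.of Filter.atTop with hUdef
  have hU : (U : Filter ℕ) ≤ Filter.atTop := Ultrafilter.of_le _
  have key : ∀ f, MemMorrey1 p q f →
      Filter.Tendsto (c f) (U : Filter ℕ) (𝓝 (limUnder (U : Filter ℕ) (c f))) ∧
      |limUnder (U : Filter ℕ) (c f)| ≤ (morreyNorm1 p q f).toReal := by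
    intro f hf
    set B := (morreyNorm1 p q f).toReal with hB
    have hb : ∀ k, c f k ∈ Set.Icc (-B) B := by
      intro k
      have h := abs_le.mp (abs_integral_le_morrey p q hq f hf ((k:ℝ)^α))
      exact Set.mem_Icc.mpr ⟨h.1, h.2⟩
    have hmap : (U.map (c f) : Filter ℝ) ≤ Filter.principal (Set.Icc (-B) B) := by
      rw [Ultrafilter.coe_map]
      exact Filter.le_principal_iff.mpr (Filter.mem_map.mpr (Filter.univ_mem' hb))
    obtain ⟨x, hxmem, hx⟩ :=
      (isCompact_Icc (a := -B) (b := B)).ultrafilter_le_nhds (U.map (c f)) hmap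
    rw [Ultrafilter.coe_map] at hx
    have hten : Filter.Tendsto (c f) (U : Filter ℕ) (𝓝 x) := hx
    rw [hten.limUnder_eq]
    exact ⟨hten, abs_le.mpr ⟨hxmem.1, hxmem.2⟩⟩
  refine ⟨fun f => limUnder (U : Filter ℕ) (c f), ?_, ?_, ?_, ?_, ?_⟩
  · intro f g hf hg
    have h1 := (key f hf).1
    have h2 := (key g hg).1
    have hceq : c (f + g) = fun k => c f k + c g k := by
      funext k
      simp only [hcdef]
      rw [← integral_add (integrableOn_of_morrey p q hq f hf _)
        (integrableOn_of_morrey p q hq g hg _)]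
      rfl
    have hten : Filter.Tendsto (c (f + g)) (U : Filter ℕ)
        (𝓝 (limUnder (U : Filter ℕ) (c f) + limUnder (U : Filter ℕ) (c g))) := by
      rw [hceq]; exact h1.add h2
    exact hten.limUnder_eq
  · intro r f hf
    have h1 := (key f hf).1
    have hceq : c (r • f) = fun k => r * c f k := by
      funext k
      simp only [hcdef, Pi.smul_apply, smul_eq_mul]
      rw [← integral_const_mul]
    have hten : Filter.Tendsto (c (r • f)) (U : Filter ℕ)
        (𝓝 (r * limUnder (U : Filter ℕ) (c f))) := by
      rw [hceq]; exact h1.const_mul r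
    exact hten.limUnder_eq
  · refine ⟨1, zero_le_one, fun f hf => ?_⟩
    have h2 := (key f hf).2
    calc ENNReal.ofReal |limUnder (U : Filter ℕ) (c f)|
        ≤ ENNReal.ofReal (morreyNorm1 p q f).toReal := ENNReal.ofReal_le_ofReal h2
      _ ≤ morreyNorm1 p q f := ENNReal.ofReal_toReal_le
      _ = ENNReal.ofReal 1 * morreyNorm1 p q f := by rw [ENNReal.ofReal_one, one_mul]
  · set S : Set ℝ := ⋃ k : ℕ, I k with hSdef
    have hS : MeasurableSet S := MeasurableSet.iUnion fun k => measurableSet_Ioo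
    refine ⟨S.indicator (fun _ => (1:ℝ)), ⟨measurable_const.indicator hS, ?_⟩, ?_⟩
    · exact lt_of_le_of_lt (witness_norm_le p q hq hqp) (by simp)
    · have hc1 : ∀ k, c (S.indicator fun _ => (1:ℝ)) k = 1 := by
        intro k
        have heq : Set.EqOn (S.indicator fun _ => (1:ℝ)) (fun _ => (1:ℝ)) (I k) := by
          intro x hx
          exact Set.indicator_of_mem (Set.mem_iUnion.mpr ⟨k, hx⟩) _
        simp only [hcdef]
        rw [setIntegral_congr_fun measurableSet_Ioo heq]
        simp [Real.volume_Ioo]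
      have hten : Filter.Tendsto (c (S.indicator fun _ => (1:ℝ))) (U : Filter ℕ) (𝓝 1) := by
        have : (c (S.indicator fun _ => (1:ℝ))) = fun _ => (1:ℝ) := funext hc1
        rw [this]; exact tendsto_const_nhds
      have heq1 : (fun f => limUnder (U : Filter ℕ) (c f)) (S.indicator fun _ => (1:ℝ)) = 1 :=
        hten.limUnder_eq
      rw [heq1]; norm_num
  · intro f hf hcs
    obtain ⟨R, hR⟩ := hcs.isBounded.subset_closedBall 0
    have hev : ∀ᶠ k in Filter.atTop, c f k = 0 := by
      filter_upwards [Filter.eventually_ge_atTop (⌈R⌉₊ + 1)] with k hk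
      have hk1 : (1:ℝ) ≤ (k:ℝ) := by exact_mod_cast Nat.one_le_iff_ne_zero.mpr (by omega)
      have hgk : R ≤ (k:ℝ)^α := by
        have h1 : R ≤ (k:ℝ) := le_trans (Nat.le_ceil R)
          (by exact_mod_cast Nat.le_of_succ_le hk)
        have h2 : (k:ℝ) ≤ (k:ℝ)^α := by
          calc (k:ℝ) = (k:ℝ)^(1:ℝ) := (Real.rpow_one _).symm
            _ ≤ (k:ℝ)^α := Real.rpow_le_rpow_of_exponent_le hk1 hα1
        linarith
      have hz : ∀ x ∈ I k, f x = 0 := by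
        intro x hx
        by_contra hne
        have hsupp : x ∈ tsupport f := subset_tsupport f hne
        have hxball := hR hsupp
        rw [Metric.mem_closedBall, Real.dist_eq, sub_zero] at hxball
        have hRx : R < x := lt_of_le_of_lt hgk hx.1
        have : R < |x| := lt_of_lt_of_le hRx (le_abs_self x)
        linarith
      simp only [hcdef]
      exact setIntegral_eq_zero_of_forall_eq_zero hz
    have hten : Filter.Tendsto (c f) (U : Filter ℕ) (𝓝 0) := by
      refine Filter.Tendsto.congr' ?_ tendsto_const_nhds
      have hev' : ∀ᶠ k in (U : Filter ℕ), c f k = 0 := hU hev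
      exact hev'.mono fun k h => h.symm
    exact hten.limUnder_eq
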